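/- Let p and q be monic real-rooted polynomials of degree n with a common interlacer and simple pairwise distinct roots λ_1 > … > λ_n (of p) and μ_1 > … > μ_n (of q), and suppose p majorizes q. If there exists k with 1 < k < n such that Σ_{i=1}^{k} λ_i = Σ_{i=1}^{k} μ_i, then there exists k_0 ≤ k such that Σ_{i=1}^{k_0} q(λ_i)/p'(λ_i) < 0; in particular p does not strongly majorize q. -/

import Mathlib

open Polynomial Finset

private lemma range_filter_lt (n m : ℕ) (hm : m ≤ n) :
    (range n).filter (fun t => t < m) = range m := by
  ext t; simp only [mem_filter, mem_range]; omega

private lemma filter_sum_eq (n m : ℕ) (hm : m ≤ n) (f : Fin n → ℝ) (g : ℕ → ℝ)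
    (hg : ∀ i : Fin n, g i = f i) :
    ∑ i ∈ univ.filter (fun i : Fin n => (i : ℕ) < m), f i = ∑ t ∈ range m, g t := by
  rw [Finset.sum_filter]
  have h1 : ∀ i : Fin n, (if (i : ℕ) < m then f i else 0)
      = (fun t => if t < m then g t else 0) (i : ℕ) := by
    intro i; simp only [hg i]
  rw [Finset.sum_congr rfl (fun i _ => h1 i)]
  rw [show ∑ i : Fin n, (fun t => if t < m then g t else 0) (i : ℕ)
      = ∑ t ∈ range n, (if t < m then g t else 0) from
      Fin.sum_univ_eq_sum_range (fun t => if t < m then g t else 0) n]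
  rw [← Finset.sum_filter, range_filter_lt n m hm]

private lemma filter_tail_eq (n k : ℕ) :
    (range n).filter (fun t => k ≤ t) = Finset.Ico k n := by
  ext t; simp only [mem_filter, mem_range, Finset.mem_Ico]; omega

private lemma filter_prod_tail (n k : ℕ) (f : Fin n → ℝ) (g : ℕ → ℝ)
    (hg : ∀ i : Fin n, g i = f i) :
    ∏ j ∈ univ.filter (fun j : Fin n => k ≤ (j : ℕ)), f j = ∏ t ∈ range (n - k), g (k + t) := by
  rw [Finset.prod_filter]
  have h1 : ∀ i : Fin n, (if k ≤ (i : ℕ) then f i else 1)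
      = (fun t => if k ≤ t then g t else 1) (i : ℕ) := by
    intro i; simp only [hg i]
  rw [Finset.prod_congr rfl (fun i _ => h1 i)]
  rw [show ∏ i : Fin n, (fun t => if k ≤ t then g t else 1) (i : ℕ)
      = ∏ t ∈ range n, (if k ≤ t then g t else 1) from
      Fin.prod_univ_eq_prod_range (fun t => if k ≤ t then g t else 1) n]
  rw [← Finset.prod_filter, filter_tail_eq, Finset.prod_Ico_eq_prod_range]

private lemma filter_sum_tail (n k : ℕ) (f : Fin n → ℝ) (g : ℕ → ℝ)
    (hg : ∀ i : Fin n, g i = f i) :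
    ∑ j ∈ univ.filter (fun j : Fin n => k ≤ (j : ℕ)), f j = ∑ t ∈ range (n - k), g (k + t) := by
  rw [Finset.sum_filter]
  have h1 : ∀ i : Fin n, (if k ≤ (i : ℕ) then f i else 0)
      = (fun t => if k ≤ t then g t else 0) (i : ℕ) := by
    intro i; simp only [hg i]
  rw [Finset.sum_congr rfl (fun i _ => h1 i)]
  rw [show ∑ i : Fin n, (fun t => if k ≤ t then g t else 0) (i : ℕ)
      = ∑ t ∈ range n, (if k ≤ t then g t else 0) from
      Fin.sum_univ_eq_sum_range (fun t => if k ≤ t then g t else 0) n]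
  rw [← Finset.sum_filter, filter_tail_eq, Finset.sum_Ico_eq_sum_range]

private lemma abel_sum (w e : ℕ → ℝ) : ∀ m : ℕ, 1 ≤ m →
    ∑ t ∈ range m, w t * e t =
      w (m - 1) * (∑ u ∈ range m, e u) +
      ∑ t ∈ range (m - 1), (w t - w (t + 1)) * (∑ u ∈ range (t + 1), e u) := by
  intro m
  induction m with
  | zero => intro h; omega
  | succ m ih =>
    intro _
    rcases Nat.eq_zero_or_pos m with rfl | hm
    · simp
    · have hm1 : m - 1 + 1 = m := by omega
      rw [Finset.sum_range_succ, ih hm, Nat.succ_sub_one]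
      have h2 : ∑ t ∈ range m, (w t - w (t + 1)) * (∑ u ∈ range (t + 1), e u)
          = ∑ t ∈ range (m - 1), (w t - w (t + 1)) * (∑ u ∈ range (t + 1), e u)
            + (w (m - 1) - w m) * (∑ u ∈ range m, e u) := by
        conv_lhs => rw [← hm1, Finset.sum_range_succ, hm1]
      rw [h2, Finset.sum_range_succ]
      ring

private lemma sum_subset_le_sorted (n : ℕ) (a : Fin n → ℝ)
    (ha : ∀ i j : Fin n, i ≤ j → a j ≤ a i) (s : Finset (Fin n)) :
    ∑ i ∈ s, a i ≤ ∑ i ∈ univ.filter (fun i : Fin n => (i : ℕ) < s.card), a i := by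
  induction s using Finset.strongInduction with
  | _ s ih =>
    rcases s.eq_empty_or_nonempty with rfl | hne
    · simp
    · set M := s.max' hne with hM
      have hMs : M ∈ s := s.max'_mem hne
      have hcard : (s.erase M).card = s.card - 1 := Finset.card_erase_of_mem hMs
      have hc1 : 1 ≤ s.card := Finset.card_pos.mpr hne
      have hsub : s ⊆ Finset.Iic M := fun i hi => Finset.mem_Iic.mpr (s.le_max' i hi)
      have hcle : s.card ≤ (M : ℕ) + 1 := by
        calc s.card ≤ (Finset.Iic M).card := Finset.card_le_card hsub
        _ = (M : ℕ) + 1 := Fin.card_Iic M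
      have hlt : s.card - 1 < n := lt_of_le_of_lt (by omega : s.card - 1 ≤ (M : ℕ)) M.isLt
      have hle : (⟨s.card - 1, hlt⟩ : Fin n) ≤ M := by
        simp only [Fin.le_def]; omega
      have h1 : ∑ i ∈ s.erase M, a i
          ≤ ∑ i ∈ univ.filter (fun i : Fin n => (i : ℕ) < (s.erase M).card), a i :=
        ih (s.erase M) (Finset.erase_ssubset hMs)
      have hsplit : univ.filter (fun i : Fin n => (i : ℕ) < s.card)
          = insert (⟨s.card - 1, hlt⟩ : Fin n)
            (univ.filter (fun i : Fin n => (i : ℕ) < s.card - 1)) := by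
        ext i
        simp only [Finset.mem_filter, Finset.mem_insert, Finset.mem_univ, true_and, Fin.ext_iff]
        omega
      have hnotmem : (⟨s.card - 1, hlt⟩ : Fin n)
          ∉ univ.filter (fun i : Fin n => (i : ℕ) < s.card - 1) := by
        simp
      calc ∑ i ∈ s, a i = ∑ i ∈ s.erase M, a i + a M := by
            rw [← Finset.sum_erase_add s a hMs]
        _ ≤ (∑ i ∈ univ.filter (fun i : Fin n => (i : ℕ) < s.card - 1), a i)
            + a ⟨s.card - 1, hlt⟩ := by
            apply add_le_add
            · rw [hcard] at h1; exact h1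
            · exact ha _ _ hle
        _ = ∑ i ∈ univ.filter (fun i : Fin n => (i : ℕ) < s.card), a i := by
            rw [hsplit, Finset.sum_insert hnotmem]; ring

private lemma residue_sum_eq_zero {ι : Type*} [DecidableEq ι] (s : Finset ι) (v : ι → ℝ)
    (hvs : Set.InjOn v s) (f : ℝ[X]) (hdeg : f.degree < ((s.card - 1 : ℕ) : WithBot ℕ)) :
    ∑ i ∈ s, f.eval (v i) * (∏ j ∈ s.erase i, (v i - v j))⁻¹ = 0 := by
  have hdeg' : f.degree < s.card :=
    lt_of_lt_of_le hdeg (by exact_mod_cast Nat.sub_le s.card 1)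
  have hfi := Lagrange.eq_interpolate hvs hdeg'
  have hco := congrArg (fun P : ℝ[X] => P.coeff (s.card - 1)) hfi
  simp only [Lagrange.interpolate_apply] at hco
  rw [Polynomial.coeff_eq_zero_of_degree_lt hdeg] at hco
  rw [Polynomial.finset_sum_coeff] at hco
  have hterm : ∀ i ∈ s, (C (f.eval (v i)) * Lagrange.basis s v i).coeff (s.card - 1)
      = f.eval (v i) * (∏ j ∈ s.erase i, (v i - v j))⁻¹ := by
    intro i hi
    rw [Polynomial.coeff_C_mul]
    congr 1
    have hb : Lagrange.basis s v i
        = C (∏ j ∈ s.erase i, (v i - v j)⁻¹) * ∏ j ∈ s.erase i, (X - C (v j)) := by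
      rw [Lagrange.basis]
      simp_rw [Lagrange.basisDivisor]
      rw [Finset.prod_mul_distrib, map_prod]
    rw [hb, Polynomial.coeff_C_mul, ← Finset.prod_inv_distrib]
    have hmonic : (∏ j ∈ s.erase i, (X - C (v j))).Monic :=
      monic_prod_of_monic _ _ (fun j _ => monic_X_sub_C _)
    have hdeg2 : (∏ j ∈ s.erase i, (X - C (v j))).natDegree = s.card - 1 := by
      rw [Polynomial.natDegree_prod _ _ (fun j _ => X_sub_C_ne_zero _)]
      simp [Polynomial.natDegree_X_sub_C, Finset.card_erase_of_mem hi]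
    rw [← hdeg2, hmonic.coeff_natDegree, mul_one]
  rw [Finset.sum_congr rfl hterm] at hco
  exact hco.symm

private lemma sorted_eq_of_multiset (n : ℕ) (f g : Fin n → ℝ)
    (hf : ∀ i j : Fin n, i ≤ j → f j ≤ f i) (hg : ∀ i j : Fin n, i ≤ j → g j ≤ g i)
    (h : Multiset.map f Finset.univ.val = Multiset.map g Finset.univ.val) : f = g := by
  have hperm : (List.ofFn f).Perm (List.ofFn g) := by
    rw [← Multiset.coe_eq_coe]
    have e1 : ((List.ofFn f : Multiset ℝ)) = Multiset.map f Finset.univ.val := by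
      rw [List.ofFn_eq_map]
      rfl
    have e2 : ((List.ofFn g : Multiset ℝ)) = Multiset.map g Finset.univ.val := by
      rw [List.ofFn_eq_map]
      rfl
    rw [e1, e2, h]
  have hsf : (List.ofFn f).Pairwise (fun a b : ℝ => b ≤ a) := by
    rw [List.pairwise_ofFn]
    exact fun i j hij => hf i j (le_of_lt hij)
  have hsg : (List.ofFn g).Pairwise (fun a b : ℝ => b ≤ a) := by
    rw [List.pairwise_ofFn]
    exact fun i j hij => hg i j (le_of_lt hij)
  have : IsAntisymm ℝ (fun a b : ℝ => b ≤ a) := ⟨fun a b h1 h2 => le_antisymm h2 h1⟩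
  have heq := List.Perm.eq_of_pairwise' hsf hsg hperm
  funext i
  have := congrArg (fun l : List ℝ => l[(i : ℕ)]?) heq
  simpa [List.getElem?_ofFn] using this

private lemma tail_prod_lt (m : ℕ) (hm : 2 ≤ m) (A B : ℕ → ℝ)
    (hAB : ∀ t, t < m → A t ≠ B t)
    (hsep : ∀ t t', t < t' → t' < m → max (A t') (B t') < min (A t) (B t))
    (hD : ∀ j, j ≤ m → 0 ≤ ∑ u ∈ range j, (A u - B u))
    (hDm : ∑ u ∈ range m, (A u - B u) = 0)
    (hd0 : 0 < A 0 - B 0)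
    (x₁ x₂ : ℝ) (hx : x₁ < x₂) (hx₁ : ∀ t, t < m → max (A t) (B t) < x₁) :
    ∏ t ∈ range m, ((x₂ - B t) / (x₂ - A t)) < ∏ t ∈ range m, ((x₁ - B t) / (x₁ - A t)) := by
  have hA1 : ∀ t, t < m → A t < x₁ := fun t ht =>
    lt_of_le_of_lt (le_max_left _ _) (hx₁ t ht)
  have hB1 : ∀ t, t < m → B t < x₁ := fun t ht =>
    lt_of_le_of_lt (le_max_right _ _) (hx₁ t ht)
  have hpos : ∀ y : ℝ, x₁ ≤ y → ∀ t, t < m → 0 < (y - B t) / (y - A t) := by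
    intro y hy t ht
    apply div_pos <;> linarith [hA1 t ht, hB1 t ht]
  have hP1pos : 0 < ∏ t ∈ range m, ((x₁ - B t) / (x₁ - A t)) :=
    Finset.prod_pos fun t ht => hpos x₁ le_rfl t (mem_range.mp ht)
  have hP2pos : 0 < ∏ t ∈ range m, ((x₂ - B t) / (x₂ - A t)) :=
    Finset.prod_pos fun t ht => hpos x₂ (le_of_lt hx) t (mem_range.mp ht)
  rw [← Real.log_lt_log_iff hP2pos hP1pos]
  rw [Real.log_prod (fun t ht => ne_of_gt (hpos x₂ (le_of_lt hx) t (mem_range.mp ht))),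
    Real.log_prod (fun t ht => ne_of_gt (hpos x₁ le_rfl t (mem_range.mp ht)))]
  set G : ℝ → ℝ := fun u => Real.log (x₁ - u) - Real.log (x₂ - u) with hGdef
  set G' : ℝ → ℝ := fun u => (x₂ - u)⁻¹ - (x₁ - u)⁻¹ with hG'def
  have hderiv : ∀ u, u < x₁ → HasDerivAt G (G' u) u := by
    intro u hu
    have h1 : HasDerivAt (fun w : ℝ => x₁ - w) (-1) u := (hasDerivAt_id u).const_sub x₁
    have h2 : HasDerivAt (fun w : ℝ => x₂ - w) (-1) u := (hasDerivAt_id u).const_sub x₂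
    have hl1 : HasDerivAt (fun w : ℝ => Real.log (x₁ - w)) ((x₁ - u)⁻¹ * (-1)) u :=
      (Real.hasDerivAt_log (ne_of_gt (by linarith : (0:ℝ) < x₁ - u))).comp u h1
    have hl2 : HasDerivAt (fun w : ℝ => Real.log (x₂ - w)) ((x₂ - u)⁻¹ * (-1)) u :=
      (Real.hasDerivAt_log (ne_of_gt (by linarith : (0:ℝ) < x₂ - u))).comp u h2
    have h3 := hl1.sub hl2
    refine (h3 : HasDerivAt G _ u).congr_deriv ?_
    show (x₁ - u)⁻¹ * (-1) - (x₂ - u)⁻¹ * (-1) = (x₂ - u)⁻¹ - (x₁ - u)⁻¹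
    ring
  have hG'anti : ∀ u₁ u₂, u₁ < u₂ → u₂ < x₁ → G' u₂ < G' u₁ := by
    intro u₁ u₂ h12 h2x
    have p11 : 0 < x₁ - u₂ := by linarith
    have p12 : 0 < x₂ - u₂ := by linarith
    have p21 : 0 < x₁ - u₁ := by linarith
    have p22 : 0 < x₂ - u₁ := by linarith
    have e : ∀ u, u < x₁ → G' u = (x₁ - x₂) / ((x₁ - u) * (x₂ - u)) := by
      intro u hu
      have q1 : x₁ - u ≠ 0 := ne_of_gt (by linarith)
      have q2 : x₂ - u ≠ 0 := ne_of_gt (by linarith)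
      show (x₂ - u)⁻¹ - (x₁ - u)⁻¹ = (x₁ - x₂) / ((x₁ - u) * (x₂ - u))
      rw [inv_sub_inv q2 q1, div_eq_div_iff (mul_ne_zero q2 q1) (mul_ne_zero q1 q2)]
      ring
    rw [e u₁ (by linarith), e u₂ h2x, div_lt_div_iff₀ (by positivity) (by positivity)]
    have hPP : (x₁ - u₂) * (x₂ - u₂) < (x₁ - u₁) * (x₂ - u₁) := by nlinarith
    nlinarith [hPP]
  -- Mean value theorem on each interval
  have hMVT : ∀ t, ∃ ξ : ℝ, t < m →
      (min (A t) (B t) < ξ ∧ ξ < max (A t) (B t)) ∧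
      G (B t) - G (A t) = G' ξ * (B t - A t) := by
    intro t
    by_cases ht : t < m
    · have hab : min (A t) (B t) < max (A t) (B t) := by
        rcases lt_or_gt_of_ne (hAB t ht) with h | h
        · rw [min_eq_left (le_of_lt h), max_eq_right (le_of_lt h)]; exact h
        · rw [min_eq_right (le_of_lt h), max_eq_left (le_of_lt h)]; exact h
      have hcont : ContinuousOn G (Set.Icc (min (A t) (B t)) (max (A t) (B t))) := by
        intro u hu
        have hux : u < x₁ := lt_of_le_of_lt hu.2 (hx₁ t ht)
        exact (hderiv u hux).continuousAt.continuousWithinAt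
      have hdiff : ∀ u ∈ Set.Ioo (min (A t) (B t)) (max (A t) (B t)), HasDerivAt G (G' u) u :=
        fun u hu => hderiv u (lt_trans hu.2 (hx₁ t ht))
      obtain ⟨ξ, hξmem, hξeq⟩ := exists_hasDerivAt_eq_slope G G' hab hcont hdiff
      refine ⟨ξ, fun _ => ⟨⟨hξmem.1, hξmem.2⟩, ?_⟩⟩
      have hBA : B t - A t ≠ 0 := fun h => hAB t ht (by linarith [h])
      have hslope : G' ξ = (G (B t) - G (A t)) / (B t - A t) := by
        rcases lt_or_gt_of_ne (hAB t ht) with h | h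
        · rw [hξeq, min_eq_left (le_of_lt h), max_eq_right (le_of_lt h)]
        · rw [hξeq, min_eq_right (le_of_lt h), max_eq_left (le_of_lt h)]
          rw [div_eq_div_iff (sub_ne_zero.mpr (ne_of_gt h)) (sub_ne_zero.mpr (ne_of_lt h))]
          ring
      rw [hslope, div_mul_cancel₀ _ hBA]
    · exact ⟨0, fun h => absurd h ht⟩
  choose ξ hξ using hMVT
  -- rearrange goal into sum of G differences
  have hgoal : ∑ t ∈ range m, Real.log ((x₂ - B t) / (x₂ - A t))
      < ∑ t ∈ range m, Real.log ((x₁ - B t) / (x₁ - A t)) := by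
    rw [← sub_pos, ← Finset.sum_sub_distrib]
    have hre : ∀ t ∈ range m,
        Real.log ((x₁ - B t) / (x₁ - A t)) - Real.log ((x₂ - B t) / (x₂ - A t))
        = G' (ξ t) * (B t - A t) := by
      intro t ht'
      have ht := mem_range.mp ht'
      have l1 : Real.log ((x₁ - B t) / (x₁ - A t))
          = Real.log (x₁ - B t) - Real.log (x₁ - A t) :=
        Real.log_div (ne_of_gt (by linarith [hB1 t ht])) (ne_of_gt (by linarith [hA1 t ht]))
      have l2 : Real.log ((x₂ - B t) / (x₂ - A t))
          = Real.log (x₂ - B t) - Real.log (x₂ - A t) :=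
        Real.log_div (ne_of_gt (by linarith [hB1 t ht])) (ne_of_gt (by linarith [hA1 t ht]))
      have := (hξ t ht).2
      simp only [hGdef] at this
      rw [l1, l2, ← this]
      ring
    rw [Finset.sum_congr rfl hre]
    -- Abel summation
    have hξltx : ∀ t, t < m → ξ t < x₁ := fun t ht =>
      lt_trans ((hξ t ht).1.2) (hx₁ t ht)
    have hwlt : ∀ t, t + 1 < m → G' (ξ t) < G' (ξ (t + 1)) := by
      intro t ht1
      have ht : t < m := by omega
      have hch : ξ (t + 1) < ξ t := by
        have h1 := (hξ (t + 1) ht1).1.2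
        have h2 := hsep t (t + 1) (by omega) ht1
        have h3 := (hξ t ht).1.1
        linarith
      exact hG'anti _ _ hch (hξltx t ht)
    have habel' : ∑ t ∈ range m, G' (ξ t) * (A t - B t)
        = G' (ξ (m - 1)) * (∑ u ∈ range m, (A u - B u))
          + ∑ t ∈ range (m - 1), (G' (ξ t) - G' (ξ (t + 1))) * (∑ u ∈ range (t + 1), (A u - B u)) :=
      abel_sum (fun t => G' (ξ t)) (fun t => A t - B t) m (by omega)
    have hsumneg : ∑ t ∈ range m, G' (ξ t) * (A t - B t) < 0 := by
      rw [habel', hDm, mul_zero, zero_add]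
      have hterm : ∀ t ∈ range (m - 1),
          (G' (ξ t) - G' (ξ (t + 1))) * (∑ u ∈ range (t + 1), (A u - B u)) ≤ (fun _ => (0:ℝ)) t := by
        intro t ht'
        have ht := mem_range.mp ht'
        exact mul_nonpos_iff.mpr (Or.inr ⟨le_of_lt (sub_neg.mpr (hwlt t (by omega))),
          hD (t + 1) (by omega)⟩)
      have hstrict : (G' (ξ 0) - G' (ξ 1)) * (∑ u ∈ range 1, (A u - B u)) < 0 := by
        rw [Finset.sum_range_one]
        exact mul_neg_of_neg_of_pos (sub_neg.mpr (hwlt 0 (by omega))) hd0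
      calc ∑ t ∈ range (m - 1), (G' (ξ t) - G' (ξ (t + 1))) * (∑ u ∈ range (t + 1), (A u - B u))
          < ∑ t ∈ range (m - 1), (fun _ => (0:ℝ)) t :=
            Finset.sum_lt_sum hterm ⟨0, mem_range.mpr (by omega), hstrict⟩
        _ = 0 := by simp
    have hfinal : ∑ t ∈ range m, G' (ξ t) * (B t - A t)
        = -∑ t ∈ range m, G' (ξ t) * (A t - B t) := by
      rw [← Finset.sum_neg_distrib]
      exact Finset.sum_congr rfl fun t _ => by ring
    rw [hfinal]
    linarith
  exact hgoal

set_option maxHeartbeats 2000000 in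
/-- **Simple majorization without strong majorization.**
Let `p, q` be monic real-rooted polynomials of degree `n` with a common interlacer and
simple pairwise distinct roots `λ₁ > … > λₙ` (of `p`) and `μ₁ > … > μₙ` (of `q`), and
suppose `p` majorizes `q`.  If some intermediate partial sums of roots coincide, i.e.
`∑_{i=1}^{k} λᵢ = ∑_{i=1}^{k} μᵢ` for some `1 < k < n`, then some partial sum of
residues `∑_{i=1}^{k₀} q(λᵢ)/p'(λᵢ)` with `k₀ ≤ k` is negative; in particular `p`
does not strongly majorize `q` (here `Λ t 1 ≥ … ≥ Λ t n` are the roots of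
`t·p + (1−t)·q`). -/
theorem majorization_without_strong_majorization
    (n : ℕ) (lam mu : Fin n → ℝ)
    (hlam : StrictAnti lam) (hmu : StrictAnti mu)
    (hdistinct : ∀ i, lam i ≠ mu i)
    (hinterlacer : ∀ i j : Fin n, i < j → max (lam j) (mu j) < min (lam i) (mu i))
    (p q : Polynomial ℝ)
    (hp : p = ∏ i, (X - C (lam i)))
    (hq : q = ∏ i, (X - C (mu i)))
    (hmaj : ∀ k ≤ n,
      ∑ i ∈ univ.filter (fun i : Fin n => (i : ℕ) < k), mu i ≤
        ∑ i ∈ univ.filter (fun i : Fin n => (i : ℕ) < k), lam i)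
    (htot : ∑ i, lam i = ∑ i, mu i)
    (Lam : ℝ → Fin n → ℝ)
    (hLamroots : ∀ t ∈ Set.Icc (0 : ℝ) 1,
      C t * p + C (1 - t) * q = ∏ i, (X - C (Lam t i)))
    (hLamanti : ∀ t ∈ Set.Icc (0 : ℝ) 1, ∀ i j : Fin n, i ≤ j → Lam t j ≤ Lam t i)
    (k : ℕ) (hk1 : 1 < k) (hkn : k < n)
    (heq : ∑ i ∈ univ.filter (fun i : Fin n => (i : ℕ) < k), lam i =
      ∑ i ∈ univ.filter (fun i : Fin n => (i : ℕ) < k), mu i) :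
    (∃ k₀, 1 ≤ k₀ ∧ k₀ ≤ k ∧
      ∑ i ∈ univ.filter (fun i : Fin n => (i : ℕ) < k₀),
        q.eval (lam i) / (Polynomial.derivative p).eval (lam i) < 0) ∧
    ¬ (∀ s ∈ Set.Icc (0 : ℝ) 1, ∀ t ∈ Set.Icc (0 : ℝ) 1, t ≤ s → ∀ m ≤ n,
        ∑ i ∈ univ.filter (fun i : Fin n => (i : ℕ) < m), Lam t i ≤
          ∑ i ∈ univ.filter (fun i : Fin n => (i : ℕ) < m), Lam s i) := by
  classical
  have hn0 : 0 < n := by omega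
  -- ℕ-indexed root sequences
  set lam' : ℕ → ℝ := fun t => if h : t < n then lam ⟨t, h⟩ else 0 with hlam'def
  set mu' : ℕ → ℝ := fun t => if h : t < n then mu ⟨t, h⟩ else 0 with hmu'def
  have hlam' : ∀ i : Fin n, lam' (i : ℕ) = lam i := by
    intro i; simp [hlam'def]
  have hmu' : ∀ i : Fin n, mu' (i : ℕ) = mu i := by
    intro i; simp [hmu'def]
  have hlam'at : ∀ t (ht : t < n), lam' t = lam ⟨t, ht⟩ := by
    intro t ht; simp [hlam'def, ht]
  have hmu'at : ∀ t (ht : t < n), mu' t = mu ⟨t, ht⟩ := by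
    intro t ht; simp [hmu'def, ht]
  -- order helpers
  have hlm : ∀ i j : Fin n, i < j → mu j < lam i := fun i j h =>
    lt_of_le_of_lt (le_max_right (lam j) (mu j))
      (lt_of_lt_of_le (hinterlacer i j h) (min_le_left _ _))
  have hml : ∀ i j : Fin n, i < j → lam j < mu i := fun i j h =>
    lt_of_le_of_lt (le_max_left (lam j) (mu j))
      (lt_of_lt_of_le (hinterlacer i j h) (min_le_right _ _))
  -- partial sum facts
  have hDj : ∀ j, j ≤ n → 0 ≤ ∑ u ∈ range j, (lam' u - mu' u) := by
    intro j hj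
    have h1 := hmaj j hj
    rw [filter_sum_eq n j hj lam lam' hlam', filter_sum_eq n j hj mu mu' hmu'] at h1
    rw [Finset.sum_sub_distrib]
    linarith
  have huniv : univ.filter (fun i : Fin n => (i : ℕ) < n) = univ := by
    apply Finset.filter_true_of_mem; intro i _; exact i.isLt
  have hDn : ∑ u ∈ range n, (lam' u - mu' u) = 0 := by
    have h1 : ∑ i ∈ univ.filter (fun i : Fin n => (i : ℕ) < n), lam i
        = ∑ i ∈ univ.filter (fun i : Fin n => (i : ℕ) < n), mu i := by
      rw [huniv]; exact htot
    rw [filter_sum_eq n n le_rfl lam lam' hlam', filter_sum_eq n n le_rfl mu mu' hmu'] at h1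
    rw [Finset.sum_sub_distrib]
    linarith
  have hDk : ∑ u ∈ range k, (lam' u - mu' u) = 0 := by
    have h1 := heq
    rw [filter_sum_eq n k (le_of_lt hkn) lam lam' hlam',
      filter_sum_eq n k (le_of_lt hkn) mu mu' hmu'] at h1
    rw [Finset.sum_sub_distrib]
    linarith
  have hdne : ∀ t, t < n → lam' t ≠ mu' t := by
    intro t ht
    rw [hlam'at t ht, hmu'at t ht]
    exact hdistinct ⟨t, ht⟩
  have hd0pos : 0 < lam' 0 - mu' 0 := by
    have h1 := hDj 1 (by omega)
    rw [Finset.sum_range_one] at h1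
    rcases lt_or_eq_of_le h1 with h | h
    · exact h
    · exact absurd (by linarith : lam' 0 = mu' 0) (hdne 0 hn0)
  have hkn2 : k + 2 ≤ n := by
    by_contra hcon
    have hnk : n = k + 1 := by omega
    have h2 : lam' k - mu' k = 0 := by
      have h3 := hDn
      rw [hnk, Finset.sum_range_succ, hDk, zero_add] at h3
      linarith
    exact hdne k (by omega) (by linarith)
  have hdkpos : 0 < lam' k - mu' k := by
    have h1 := hDj (k + 1) (by omega)
    rw [Finset.sum_range_succ, hDk, zero_add] at h1
    rcases lt_or_eq_of_le h1 with h | h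
    · exact h
    · exact absurd (by linarith : lam' k = mu' k) (hdne k (by omega))
  -- evaluation formulas
  have hqeval : ∀ x : ℝ, q.eval x = ∏ j, (x - mu j) := by
    intro x; rw [hq, eval_prod]; simp
  have hpeval : ∀ x : ℝ, p.eval x = ∏ j, (x - lam j) := by
    intro x; rw [hp, eval_prod]; simp
  have hpsplit : ∀ i : Fin n, p = (X - C (lam i)) * ∏ j ∈ univ.erase i, (X - C (lam j)) := by
    intro i
    rw [hp]
    exact (Finset.mul_prod_erase univ (fun j => X - C (lam j)) (mem_univ i)).symm
  have hPne : ∀ i : Fin n, (∏ j ∈ univ.erase i, (lam i - lam j)) ≠ 0 := by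
    intro i
    rw [Finset.prod_ne_zero_iff]
    intro j hj
    exact sub_ne_zero.mpr (fun h => (Finset.mem_erase.mp hj).1 (hlam.injective h).symm)
  have hp'eval : ∀ i : Fin n, (derivative p).eval (lam i)
      = ∏ j ∈ univ.erase i, (lam i - lam j) := by
    intro i
    rw [hpsplit i, derivative_mul]
    simp [eval_prod]
  -- residues
  set resid : Fin n → ℝ := fun i => q.eval (lam i) / (Polynomial.derivative p).eval (lam i)
    with hresiddef
  have hresid_eq : ∀ i : Fin n,
      resid i = (∏ j, (lam i - mu j)) / (∏ j ∈ univ.erase i, (lam i - lam j)) := by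
    intro i; simp only [hresiddef]; rw [hqeval, hp'eval]
  set r' : ℕ → ℝ := fun t => if h : t < n then resid ⟨t, h⟩ else 0 with hr'def
  have hr' : ∀ i : Fin n, r' (i : ℕ) = resid i := by
    intro i; simp [hr'def]
  -- the head set and tail set
  set sh : Finset (Fin n) := univ.filter (fun i : Fin n => (i : ℕ) < k) with hshdef
  have hshcard : sh.card = k := by
    have h1 : sh = Finset.Iio (⟨k, hkn⟩ : Fin n) := by
      ext i
      simp [hshdef, Finset.mem_Iio, Fin.lt_def]
    rw [h1, Fin.card_Iio]
  set tailset : Finset (Fin n) := univ.filter (fun j : Fin n => k ≤ (j : ℕ)) with htaildef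
  have hmemsh : ∀ i : Fin n, i ∈ sh ↔ (i : ℕ) < k := by
    intro i; simp [hshdef]
  have hmemtail : ∀ j : Fin n, j ∈ tailset ↔ k ≤ (j : ℕ) := by
    intro j; simp [htaildef]
  -- truncated residues and correction factors
  set chat : Fin n → ℝ := fun i =>
    (∏ j ∈ sh, (lam i - mu j)) * (∏ j ∈ sh.erase i, (lam i - lam j))⁻¹ with hchatdef
  set cc : Fin n → ℝ := fun i => ∏ j ∈ tailset, ((lam i - mu j) / (lam i - lam j)) with hccdef
  -- nonvanishing of head and tail denominators
  have hPhne : ∀ i : Fin n, (∏ j ∈ sh.erase i, (lam i - lam j)) ≠ 0 := by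
    intro i
    rw [Finset.prod_ne_zero_iff]
    intro j hj
    exact sub_ne_zero.mpr (fun h => (Finset.mem_erase.mp hj).1 (hlam.injective h).symm)
  have htail_pos : ∀ i : Fin n, (i : ℕ) < k → ∀ j ∈ tailset,
      0 < lam i - lam j ∧ 0 < lam i - mu j := by
    intro i hik j hj
    have hij : i < j := by
      rw [hmemtail] at hj
      exact Fin.lt_def.mpr (by omega)
    exact ⟨sub_pos.mpr (hlam hij), sub_pos.mpr (hlm i j hij)⟩
  have hPtne : ∀ i : Fin n, (i : ℕ) < k → (∏ j ∈ tailset, (lam i - lam j)) ≠ 0 := by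
    intro i hik
    rw [Finset.prod_ne_zero_iff]
    intro j hj
    exact ne_of_gt (htail_pos i hik j hj).1
  -- factorization of the residues
  have hfact : ∀ i ∈ sh, resid i = chat i * cc i := by
    intro i hi
    have hik : (i : ℕ) < k := (hmemsh i).mp hi
    have hnum : (∏ j, (lam i - mu j))
        = (∏ j ∈ sh, (lam i - mu j)) * (∏ j ∈ tailset, (lam i - mu j)) := by
      rw [← Finset.prod_filter_mul_prod_filter_not univ (fun j : Fin n => (j : ℕ) < k)
        (fun j => lam i - mu j)]
      congr 1
      apply Finset.prod_congr _ (fun _ _ => rfl)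
      ext j
      simp only [Finset.mem_filter, Finset.mem_univ, true_and, htaildef]
      omega
    have hdisj : Disjoint (sh.erase i) tailset := by
      rw [Finset.disjoint_left]
      intro j hj hj'
      have h1 : (j : ℕ) < k := (hmemsh j).mp (Finset.mem_of_mem_erase hj)
      have h2 : k ≤ (j : ℕ) := (hmemtail j).mp hj'
      omega
    have hden : (∏ j ∈ univ.erase i, (lam i - lam j))
        = (∏ j ∈ sh.erase i, (lam i - lam j)) * (∏ j ∈ tailset, (lam i - lam j)) := by
      rw [← Finset.prod_union hdisj]
      apply Finset.prod_congr _ (fun _ _ => rfl)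
      ext j
      simp only [Finset.mem_erase, Finset.mem_univ, and_true, Finset.mem_union,
        hshdef, htaildef, Finset.mem_filter, true_and]
      constructor
      · intro hji
        by_cases h : (j : ℕ) < k
        · exact Or.inl ⟨hji, h⟩
        · exact Or.inr (by omega)
      · rintro (⟨hji, _⟩ | hjk)
        · exact hji
        · intro hji
          rw [hji] at hjk
          omega
    rw [hresid_eq i, hnum, hden]
    simp only [hchatdef, hccdef]
    rw [Finset.prod_div_distrib]
    field_simp
  -- positivity of the correction factors
  have hccpos : ∀ i : Fin n, (i : ℕ) < k → 0 < cc i := by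
    intro i hik
    apply Finset.prod_pos
    intro j hj
    obtain ⟨h1, h2⟩ := htail_pos i hik j hj
    exact div_pos h2 h1
  -- the top truncated residue is positive
  have hzero_lt : ∀ j : Fin n, j ≠ ⟨0, hn0⟩ → (⟨0, hn0⟩ : Fin n) < j := by
    intro j hne
    rw [Fin.lt_def]
    show 0 < (j : ℕ)
    exact Nat.pos_of_ne_zero (fun h => hne (Fin.ext (by simp [h])))
  have hchat0pos : 0 < chat (⟨0, hn0⟩ : Fin n) := by
    have h0s : (⟨0, hn0⟩ : Fin n) ∈ sh := (hmemsh _).mpr (by simpa using (zero_lt_one.trans hk1))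
    apply mul_pos
    · apply Finset.prod_pos
      intro j hj
      rcases eq_or_ne j ⟨0, hn0⟩ with rfl | hne
      · have h1 := hd0pos
        rw [hlam'at 0 hn0, hmu'at 0 hn0] at h1
        linarith
      · exact sub_pos.mpr (hlm _ j (hzero_lt j hne))
    · rw [inv_pos]
      apply Finset.prod_pos
      intro j hj
      have hne : j ≠ (⟨0, hn0⟩ : Fin n) := (Finset.mem_erase.mp hj).1
      exact sub_pos.mpr (hlam (hzero_lt j hne))
  -- the truncated residues sum to zero (Lagrange interpolation)
  have hinj : Set.InjOn lam ↑sh := fun a _ b _ h => hlam.injective h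
  have hsumchat : ∑ i ∈ sh, chat i = 0 := by
    set ph : ℝ[X] := ∏ j ∈ sh, (X - C (lam j)) with hphdef
    set qh : ℝ[X] := ∏ j ∈ sh, (X - C (mu j)) with hqhdef
    have hcoeff : ∀ v : Fin n → ℝ,
        (∏ j ∈ sh, (X - C (v j))).coeff (k - 1) = -∑ j ∈ sh, v j := by
      intro v
      have h1 : ∀ j ∈ sh, X - C (v j) = X + C (-v j) := by
        intro j _; rw [map_neg, sub_eq_add_neg]
      rw [Finset.prod_congr rfl h1,
        Finset.prod_X_add_C_coeff sh (fun j => -v j) (by rw [hshcard]; omega)]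
      rw [hshcard]
      have h2 : k - (k - 1) = 1 := by omega
      rw [h2, Finset.powersetCard_one, Finset.sum_map]
      simp
    have hmon : ∀ v : Fin n → ℝ, (∏ j ∈ sh, (X - C (v j))).Monic := fun v =>
      monic_prod_of_monic _ _ (fun j _ => monic_X_sub_C _)
    have hdeg : ∀ v : Fin n → ℝ, (∏ j ∈ sh, (X - C (v j))).natDegree = k := by
      intro v
      rw [Polynomial.natDegree_prod _ _ (fun j _ => X_sub_C_ne_zero _)]
      simp [Polynomial.natDegree_X_sub_C, hshcard]
    have hfdeg : (qh - ph).degree < ((sh.card - 1 : ℕ) : WithBot ℕ) := by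
      rw [Polynomial.degree_lt_iff_coeff_zero]
      intro m hm
      rw [hshcard] at hm
      rw [Polynomial.coeff_sub]
      rcases (by omega : m = k - 1 ∨ m = k ∨ k < m) with h1 | h1 | h1
      · rw [h1, hphdef, hqhdef, hcoeff lam, hcoeff mu, heq]
        ring
      · have e1 : ph.coeff m = 1 := by
          rw [h1, hphdef, ← hdeg lam]
          exact (hmon lam).coeff_natDegree
        have e2 : qh.coeff m = 1 := by
          rw [h1, hqhdef, ← hdeg mu]
          exact (hmon mu).coeff_natDegree
        rw [e1, e2]
        ring
      · have e1 : ph.coeff m = 0 := by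
          rw [hphdef]
          apply Polynomial.coeff_eq_zero_of_natDegree_lt
          rw [hdeg lam]
          omega
        have e2 : qh.coeff m = 0 := by
          rw [hqhdef]
          apply Polynomial.coeff_eq_zero_of_natDegree_lt
          rw [hdeg mu]
          omega
        rw [e1, e2]
        ring
    have hres := residue_sum_eq_zero sh lam hinj (qh - ph) hfdeg
    have hterm : ∀ i ∈ sh,
        (qh - ph).eval (lam i) * (∏ j ∈ sh.erase i, (lam i - lam j))⁻¹ = chat i := by
      intro i hi
      have hph0 : ph.eval (lam i) = 0 := by
        rw [hphdef, eval_prod]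
        apply Finset.prod_eq_zero hi
        simp
      have hqhe : qh.eval (lam i) = ∏ j ∈ sh, (lam i - mu j) := by
        rw [hqhdef, eval_prod]; simp
      rw [Polynomial.eval_sub, hph0, hqhe, sub_zero]
    rw [Finset.sum_congr rfl hterm] at hres
    exact hres
  -- ℕ-indexed versions
  set chat' : ℕ → ℝ := fun t => if h : t < n then chat ⟨t, h⟩ else 0 with hchat'def
  set c' : ℕ → ℝ := fun t => if h : t < n then cc ⟨t, h⟩ else 0 with hc'def
  have hchat' : ∀ i : Fin n, chat' (i : ℕ) = chat i := by intro i; simp [hchat'def]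
  have hc'at : ∀ t (ht : t < n), c' t = cc ⟨t, ht⟩ := by intro t ht; simp [hc'def, ht]
  have hchat'at : ∀ t (ht : t < n), chat' t = chat ⟨t, ht⟩ := by
    intro t ht; simp [hchat'def, ht]
  have hr'at : ∀ t (ht : t < n), r' t = resid ⟨t, ht⟩ := by intro t ht; simp [hr'def, ht]
  have hRhatk : ∑ u ∈ range k, chat' u = 0 := by
    have h1 := filter_sum_eq n k (le_of_lt hkn) chat chat' hchat'
    rw [← hshdef] at h1
    rw [← h1, hsumchat]
  have hchat'0pos : 0 < chat' 0 := by
    rw [hchat'at 0 hn0]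
    exact hchat0pos
  have hc'pos : ∀ t, t < k → 0 < c' t := by
    intro t ht
    have htn : t < n := by omega
    rw [hc'at t htn]
    exact hccpos _ (by simpa using ht)
  -- shift identity for tail partial sums
  have hshift : ∀ j, ∑ u ∈ range (k + j), (lam' u - mu' u)
      = ∑ u ∈ range j, (lam' (k + u) - mu' (k + u)) := by
    intro j
    rw [Finset.sum_range_add, hDk, zero_add]
  -- range form of the correction factor
  have hccrange : ∀ i : Fin n, cc i
      = ∏ u ∈ range (n - k), ((lam i - mu' (k + u)) / (lam i - lam' (k + u))) := by
    intro i
    have h1 := filter_prod_tail n k (fun j => (lam i - mu j) / (lam i - lam j))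
      (fun u => (lam i - mu' u) / (lam i - lam' u))
      (fun j => by simp only [hlam' j, hmu' j])
    rw [← htaildef] at h1
    exact h1
  -- strict monotonicity of the correction factors
  have hc'mono : ∀ t, t + 1 < k → c' t < c' (t + 1) := by
    intro t ht
    have htn : t < n := by omega
    have ht1n : t + 1 < n := by omega
    rw [hc'at t htn, hc'at (t + 1) ht1n, hccrange ⟨t, htn⟩, hccrange ⟨t + 1, ht1n⟩]
    have hmain := tail_prod_lt (n - k) (by omega)
      (fun u => lam' (k + u)) (fun u => mu' (k + u))
      (fun u hu => hdne (k + u) (by omega))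
      (fun u u' huu' hu'm => by
        have hu'n : k + u' < n := by omega
        have hun : k + u < n := by omega
        show max (lam' (k + u')) (mu' (k + u')) < min (lam' (k + u)) (mu' (k + u))
        rw [hlam'at (k + u') hu'n, hmu'at (k + u') hu'n,
          hlam'at (k + u) hun, hmu'at (k + u) hun]
        exact hinterlacer ⟨k + u, hun⟩ ⟨k + u', hu'n⟩ (Fin.mk_lt_mk.mpr (by omega)))
      (fun j hj => by
        show 0 ≤ ∑ u ∈ range j, (lam' (k + u) - mu' (k + u))
        rw [← hshift j]
        exact hDj (k + j) (by omega))
      (by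
        show ∑ u ∈ range (n - k), (lam' (k + u) - mu' (k + u)) = 0
        rw [← hshift (n - k)]
        have hnk : k + (n - k) = n := by omega
        rw [hnk]
        exact hDn)
      (by
        show 0 < lam' (k + 0) - mu' (k + 0)
        simpa using hdkpos)
      (lam ⟨t + 1, ht1n⟩) (lam ⟨t, htn⟩)
      (hlam (Fin.mk_lt_mk.mpr (by omega)))
      (fun u hu => by
        have hun : k + u < n := by omega
        show max (lam' (k + u)) (mu' (k + u)) < lam ⟨t + 1, ht1n⟩
        rw [hlam'at (k + u) hun, hmu'at (k + u) hun]
        exact lt_of_lt_of_le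
          (hinterlacer ⟨t + 1, ht1n⟩ ⟨k + u, hun⟩ (Fin.mk_lt_mk.mpr (by omega)))
          (min_le_left _ _))
    exact hmain
  -- the core Abel estimate
  have hcore : ∀ m, 2 ≤ m → m ≤ k → (∑ u ∈ range m, chat' u) ≤ 0 →
      (∀ j, 1 ≤ j → j < m → 0 ≤ ∑ u ∈ range j, chat' u) →
      ∑ u ∈ range m, r' u < 0 := by
    intro m hm2 hmk hRm hRj
    have heqsum : ∑ u ∈ range m, r' u = ∑ u ∈ range m, c' u * chat' u := by
      apply Finset.sum_congr rfl
      intro u hu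
      have huk : u < k := lt_of_lt_of_le (mem_range.mp hu) hmk
      have hun : u < n := by omega
      rw [hr'at u hun, hc'at u hun, hchat'at u hun,
        hfact ⟨u, hun⟩ ((hmemsh _).mpr (by simpa using huk))]
      ring
    have habel : ∑ u ∈ range m, c' u * chat' u
        = c' (m - 1) * (∑ u ∈ range m, chat' u)
          + ∑ t ∈ range (m - 1), (c' t - c' (t + 1)) * (∑ u ∈ range (t + 1), chat' u) :=
      abel_sum c' chat' m (by omega)
    rw [heqsum, habel]
    have h1 : c' (m - 1) * (∑ u ∈ range m, chat' u) ≤ 0 :=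
      mul_nonpos_iff.mpr (Or.inl ⟨(hc'pos (m - 1) (by omega)).le, hRm⟩)
    have h2 : ∑ t ∈ range (m - 1), (c' t - c' (t + 1)) * (∑ u ∈ range (t + 1), chat' u) < 0 := by
      have hterm : ∀ t ∈ range (m - 1),
          (c' t - c' (t + 1)) * (∑ u ∈ range (t + 1), chat' u) ≤ (fun _ => (0 : ℝ)) t := by
        intro t ht'
        have ht := mem_range.mp ht'
        exact mul_nonpos_iff.mpr (Or.inr ⟨(sub_neg.mpr (hc'mono t (by omega))).le,
          hRj (t + 1) (by omega) (by omega)⟩)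
      have hstrict : (c' 0 - c' 1) * (∑ u ∈ range 1, chat' u) < 0 := by
        rw [Finset.sum_range_one]
        exact mul_neg_of_neg_of_pos (sub_neg.mpr (hc'mono 0 (by omega))) hchat'0pos
      calc ∑ t ∈ range (m - 1), (c' t - c' (t + 1)) * (∑ u ∈ range (t + 1), chat' u)
          < ∑ t ∈ range (m - 1), (fun _ => (0 : ℝ)) t :=
            Finset.sum_lt_sum hterm ⟨0, mem_range.mpr (by omega), hstrict⟩
        _ = 0 := by simp
    linarith
  -- Part A
  have partA : ∃ k₀, 1 ≤ k₀ ∧ k₀ ≤ k ∧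
      ∑ i ∈ univ.filter (fun i : Fin n => (i : ℕ) < k₀), resid i < 0 := by
    by_contra hcon
    push_neg at hcon
    have hcon' : ∀ m, 1 ≤ m → m ≤ k → 0 ≤ ∑ u ∈ range m, r' u := by
      intro m h1 h2
      have h3 := hcon m h1 h2
      rwa [filter_sum_eq n m (by omega) resid r' hr'] at h3
    by_cases hex : ∃ m, (1 ≤ m ∧ m ≤ k) ∧ (∑ u ∈ range m, chat' u) < 0
    · have hspec := Nat.find_spec hex
      set m₀ := Nat.find hex with hm₀def
      have hm₀1 : 1 ≤ m₀ := hspec.1.1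
      have hm₀k : m₀ ≤ k := hspec.1.2
      have hm₀2 : 2 ≤ m₀ := by
        by_contra hcon2
        have hm01 : m₀ = 1 := by omega
        have h4 := hspec.2
        rw [hm01, Finset.sum_range_one] at h4
        linarith
      have hneg := hcore m₀ hm₀2 hm₀k hspec.2.le (fun j hj1 hj2 => by
        have h5 := Nat.find_min hex (hm₀def ▸ hj2)
        push_neg at h5
        exact h5 ⟨hj1, by omega⟩)
      have h6 := hcon' m₀ (by omega) hm₀k
      linarith
    · push_neg at hex
      have hneg := hcore k hk1 le_rfl (le_of_eq hRhatk)
        (fun j h1 h2 => hex j ⟨h1, by omega⟩)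
      have h6 := hcon' k (by omega) le_rfl
      linarith
  refine ⟨partA, ?_⟩
  intro hmono
  obtain ⟨k₀, hk₀1, hk₀k, hRneg⟩ := partA
  have hk₀n : k₀ ≤ n := by omega
  have hRneg' : ∑ u ∈ range k₀, r' u < 0 := by
    rwa [filter_sum_eq n k₀ hk₀n resid r' hr'] at hRneg
  set R : ℝ := ∑ u ∈ range k₀, r' u with hRdef
  have hk₀R : (1 : ℝ) ≤ (k₀ : ℝ) := by exact_mod_cast hk₀1
  set η : ℝ := -R / (2 * (k₀ : ℝ)) with hηdef
  have hηpos : 0 < η := div_pos (by linarith) (by linarith)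
  have h1mem : (1 : ℝ) ∈ Set.Icc (0 : ℝ) 1 := by constructor <;> norm_num
  -- Lam 1 is lam
  have hLam1 : Lam 1 = lam := by
    have h1 := hLamroots 1 h1mem
    rw [show (1 : ℝ) - 1 = 0 by ring] at h1
    simp only [map_one, map_zero, one_mul, zero_mul, add_zero] at h1
    rw [hp] at h1
    have hms : Multiset.map lam Finset.univ.val = Multiset.map (Lam 1) Finset.univ.val := by
      have e1 : (∏ i, (X - C (lam i)))
          = (Multiset.map (fun a : ℝ => X - C a) (Multiset.map lam Finset.univ.val)).prod := by
        rw [Multiset.map_map, Finset.prod_eq_multiset_prod]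
        rfl
      have e2 : (∏ i, (X - C (Lam 1 i)))
          = (Multiset.map (fun a : ℝ => X - C a) (Multiset.map (Lam 1) Finset.univ.val)).prod := by
        rw [Multiset.map_map, Finset.prod_eq_multiset_prod]
        rfl
      have e3 := congrArg Polynomial.roots h1
      rw [e1, e2, Polynomial.roots_multiset_prod_X_sub_C,
        Polynomial.roots_multiset_prod_X_sub_C] at e3
      exact e3
    exact (sorted_eq_of_multiset n lam (Lam 1)
      (fun i j hij => hlam.antitone hij) (hLamanti 1 h1mem) hms).symm
  -- the cofactor polynomial evaluations
  set Pfun : ℕ → ℝ → ℝ := fun t x =>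
    if h : t < n then ∏ j ∈ univ.erase ⟨t, h⟩, (x - lam j) else 1 with hPfundef
  have hPfun_at : ∀ t (ht : t < n) (x : ℝ), Pfun t x = ∏ j ∈ univ.erase ⟨t, ht⟩, (x - lam j) := by
    intro t ht x; simp [hPfundef, ht]
  have hPfun_cont : ∀ t, Continuous (Pfun t) := by
    intro t
    by_cases ht : t < n
    · have h1 : Pfun t = fun x => ∏ j ∈ univ.erase ⟨t, ht⟩, (x - lam j) := by
        funext x; rw [hPfun_at t ht x]
      rw [h1]
      exact continuous_finset_prod _ (fun j _ => continuous_id.sub continuous_const)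
    · have h1 : Pfun t = fun _ => 1 := by funext x; simp [hPfundef, ht]
      rw [h1]; exact continuous_const
  have hpx : ∀ t (ht : t < n) (x : ℝ), p.eval x = (x - lam' t) * Pfun t x := by
    intro t ht x
    rw [hPfun_at t ht x, hlam'at t ht]
    conv_lhs => rw [hpsplit ⟨t, ht⟩]
    simp [eval_prod]
  have hp0 : ∀ t (ht : t < n), p.eval (lam' t) = 0 := by
    intro t ht
    rw [hpx t ht]
    ring
  have hPfun_ne : ∀ t (ht : t < n), Pfun t (lam' t) ≠ 0 := by
    intro t ht
    rw [hPfun_at t ht, hlam'at t ht]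
    exact hPne ⟨t, ht⟩
  have hq_at : ∀ t (ht : t < n), q.eval (lam' t) = r' t * Pfun t (lam' t) := by
    intro t ht
    rw [hr'at t ht, hresid_eq ⟨t, ht⟩, hPfun_at t ht, hlam'at t ht, ← hqeval]
    exact (div_mul_cancel₀ _ (hPne ⟨t, ht⟩)).symm
  have hFkey : ∀ t, t < n → ∀ ε u : ℝ,
      (1 - ε) * p.eval (lam' t + ε * u) + ε * q.eval (lam' t + ε * u)
      = ε * (u * Pfun t (lam' t + ε * u)
          + (q.eval (lam' t + ε * u) - p.eval (lam' t + ε * u))) := by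
    intro t ht ε u
    rw [hpx t ht (lam' t + ε * u)]
    have hxl : lam' t + ε * u - lam' t = ε * u := by ring
    rw [hxl]
    ring
  -- the two perturbation functions
  set φp : ℕ → ℝ → ℝ := fun t ε => (-(r' t) + η) * Pfun t (lam' t + ε * (-(r' t) + η))
    + (q.eval (lam' t + ε * (-(r' t) + η)) - p.eval (lam' t + ε * (-(r' t) + η))) with hφpdef
  set φm : ℕ → ℝ → ℝ := fun t ε => (-(r' t) - η) * Pfun t (lam' t + ε * (-(r' t) - η))
    + (q.eval (lam' t + ε * (-(r' t) - η)) - p.eval (lam' t + ε * (-(r' t) - η))) with hφmdef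
  have hφp0 : ∀ t, t < n → φp t 0 = η * Pfun t (lam' t) := by
    intro t ht
    have h1 : lam' t + 0 * (-(r' t) + η) = lam' t := by ring
    simp only [hφpdef, h1]
    rw [hq_at t ht, hp0 t ht]
    ring
  have hφm0 : ∀ t, t < n → φm t 0 = -η * Pfun t (lam' t) := by
    intro t ht
    have h1 : lam' t + 0 * (-(r' t) - η) = lam' t := by ring
    simp only [hφmdef, h1]
    rw [hq_at t ht, hp0 t ht]
    ring
  have hφpcont : ∀ t, Continuous (φp t) := by
    intro t
    have haff : Continuous (fun ε : ℝ => lam' t + ε * (-(r' t) + η)) :=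
      continuous_const.add (continuous_id.mul continuous_const)
    exact (continuous_const.mul ((hPfun_cont t).comp haff)).add
      (((Polynomial.continuous q).comp haff).sub ((Polynomial.continuous p).comp haff))
  have hφmcont : ∀ t, Continuous (φm t) := by
    intro t
    have haff : Continuous (fun ε : ℝ => lam' t + ε * (-(r' t) - η)) :=
      continuous_const.add (continuous_id.mul continuous_const)
    exact (continuous_const.mul ((hPfun_cont t).comp haff)).add
      (((Polynomial.continuous q).comp haff).sub ((Polynomial.continuous p).comp haff))
  -- choose a good ε
  have hev : ∀ᶠ ε in nhdsWithin (0 : ℝ) (Set.Ioi 0),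
      ((ε < 1 ∧ ∀ t ∈ range k₀, φp t ε * φm t ε < 0) ∧
        ∀ t ∈ range k₀, ∀ t' ∈ range k₀, t < t' →
          lam' t' + ε * (-(r' t') + η) < lam' t + ε * (-(r' t) - η)) := by
    apply Filter.Eventually.filter_mono nhdsWithin_le_nhds
    refine Filter.Eventually.and (Filter.Eventually.and ?_ ?_) ?_
    · exact Filter.eventually_of_mem (Iio_mem_nhds (by norm_num : (0:ℝ) < 1)) (fun x hx => hx)
    · rw [Filter.eventually_all_finset]
      intro t ht
      have htn : t < n := by
        have := mem_range.mp ht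
        omega
      have h0 : φp t 0 * φm t 0 < 0 := by
        rw [hφp0 t htn, hφm0 t htn]
        have h1 : η * Pfun t (lam' t) ≠ 0 := mul_ne_zero (ne_of_gt hηpos) (hPfun_ne t htn)
        nlinarith [sq_pos_of_ne_zero h1]
      have hcont : Continuous (fun ε => φp t ε * φm t ε) := (hφpcont t).mul (hφmcont t)
      exact Filter.eventually_of_mem
        ((hcont.continuousAt (x := 0)).preimage_mem_nhds (Iio_mem_nhds h0)) (fun x hx => hx)
    · rw [Filter.eventually_all_finset]
      intro t ht
      rw [Filter.eventually_all_finset]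
      intro t' ht'
      by_cases htt : t < t'
      · have htn : t < n := by have := mem_range.mp ht; omega
        have ht'n : t' < n := by have := mem_range.mp ht'; omega
        have hgap : lam' t' < lam' t := by
          rw [hlam'at t htn, hlam'at t' ht'n]
          exact hlam (Fin.mk_lt_mk.mpr htt)
        have hcont : Continuous (fun ε : ℝ =>
            (lam' t + ε * (-(r' t) - η)) - (lam' t' + ε * (-(r' t') + η))) := by
          apply Continuous.sub
          · exact continuous_const.add (continuous_id.mul continuous_const)
          · exact continuous_const.add (continuous_id.mul continuous_const)
        have h0 : (0:ℝ) < (lam' t + 0 * (-(r' t) - η)) - (lam' t' + 0 * (-(r' t') + η)) := by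
          ring_nf
          linarith
        have hmem := (hcont.continuousAt (x := 0)).preimage_mem_nhds (Ioi_mem_nhds h0)
        apply Filter.eventually_of_mem hmem
        intro x hx _
        have : (0:ℝ) < (lam' t + x * (-(r' t) - η)) - (lam' t' + x * (-(r' t') + η)) := hx
        linarith
      · exact Filter.Eventually.of_forall (fun x h => absurd h htt)
  obtain ⟨ε, hεA, hεpos⟩ := (hev.and eventually_mem_nhdsWithin).exists
  have hε0 : 0 < ε := hεpos
  have hε1 : ε < 1 := hεA.1.1
  set tv : ℝ := 1 - ε with htvdef
  have htv : tv ∈ Set.Icc (0:ℝ) 1 := ⟨by rw [htvdef]; linarith, by rw [htvdef]; linarith⟩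
  -- for each index below k₀ find a root of the deformed polynomial
  have hroot : ∀ t, ∃ y : ℝ, t < k₀ →
      (lam' t + ε * (-(r' t) - η) < y ∧ y < lam' t + ε * (-(r' t) + η)) ∧
      (1 - ε) * p.eval y + ε * q.eval y = 0 := by
    intro t
    by_cases ht : t < k₀
    swap
    · exact ⟨0, fun h => absurd h ht⟩
    have htn : t < n := by omega
    have hlt : lam' t + ε * (-(r' t) - η) < lam' t + ε * (-(r' t) + η) := by nlinarith
    set F : ℝ → ℝ := fun x => (1 - ε) * p.eval x + ε * q.eval x with hFdef
    have hFcont : Continuous F :=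
      (continuous_const.mul (Polynomial.continuous p)).add
        (continuous_const.mul (Polynomial.continuous q))
    have hFm : F (lam' t + ε * (-(r' t) - η)) = ε * φm t ε := by
      rw [hFdef]
      exact hFkey t htn ε _
    have hFp : F (lam' t + ε * (-(r' t) + η)) = ε * φp t ε := by
      rw [hFdef]
      exact hFkey t htn ε _
    have hφprod := hεA.1.2 t (mem_range.mpr ht)
    have hprod : F (lam' t + ε * (-(r' t) - η)) * F (lam' t + ε * (-(r' t) + η)) < 0 := by
      rw [hFm, hFp]
      have he : ε * φm t ε * (ε * φp t ε) = (ε * ε) * (φp t ε * φm t ε) := by ring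
      rw [he]
      exact mul_neg_of_pos_of_neg (mul_pos hε0 hε0) hφprod
    rcases mul_neg_iff.mp hprod with ⟨hm1, hp1⟩ | ⟨hm1, hp1⟩
    · obtain ⟨y, hy1, hy2⟩ := intermediate_value_Ioo' hlt.le hFcont.continuousOn
        (Set.mem_Ioo.mpr ⟨hp1, hm1⟩)
      exact ⟨y, fun _ => ⟨⟨hy1.1, hy1.2⟩, hy2⟩⟩
    · obtain ⟨y, hy1, hy2⟩ := intermediate_value_Ioo hlt.le hFcont.continuousOn
        (Set.mem_Ioo.mpr ⟨hm1, hp1⟩)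
      exact ⟨y, fun _ => ⟨⟨hy1.1, hy1.2⟩, hy2⟩⟩
  choose y hy using hroot
  -- each root is a value of Lam tv
  have hislam : ∀ t, ∃ j : Fin n, t < k₀ → Lam tv j = y t := by
    intro t
    by_cases ht : t < k₀
    swap
    · exact ⟨⟨0, hn0⟩, fun h => absurd h ht⟩
    have h1 := hLamroots tv htv
    have h2 := congrArg (Polynomial.eval (y t)) h1
    simp only [eval_add, eval_mul, eval_C, eval_prod, eval_sub, eval_X] at h2
    rw [htvdef] at h2
    rw [show (1:ℝ) - (1 - ε) = ε by ring] at h2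
    rw [(hy t ht).2] at h2
    obtain ⟨j, _, hj⟩ := Finset.prod_eq_zero_iff.mp h2.symm
    exact ⟨j, fun _ => by linarith [sub_eq_zero.mp hj]⟩
  choose jf hjf using hislam
  -- ordering and injectivity
  have hysep : ∀ t t', t < t' → t' < k₀ → y t' < y t := by
    intro t t' h1 h2
    have h3 := (hy t (by omega)).1
    have h4 := (hy t' h2).1
    have h5 := hεA.2 t (mem_range.mpr (by omega)) t' (mem_range.mpr h2) h1
    linarith [h3.1, h4.2]
  have hjinj' : ∀ a ∈ range k₀, ∀ b ∈ range k₀, jf a = jf b → a = b := by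
    intro a ha b hb hab
    by_contra hne
    rcases Nat.lt_or_ge a b with h | h
    · have h1 := hysep a b h (mem_range.mp hb)
      rw [← hjf a (mem_range.mp ha), ← hjf b (mem_range.mp hb), hab] at h1
      exact lt_irrefl _ h1
    · have hba : b < a := by omega
      have h1 := hysep b a hba (mem_range.mp ha)
      rw [← hjf a (mem_range.mp ha), ← hjf b (mem_range.mp hb), hab] at h1
      exact lt_irrefl _ h1
  -- the two estimates
  have hsum1 : ∑ t ∈ range k₀, y t ≤ ∑ u ∈ range k₀, lam' u := by
    have hinjOn : Set.InjOn jf ↑(range k₀) := fun a ha b hb hab =>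
      hjinj' a (Finset.mem_coe.mp ha) b (Finset.mem_coe.mp hb) hab
    calc ∑ t ∈ range k₀, y t = ∑ t ∈ range k₀, Lam tv (jf t) := by
          apply Finset.sum_congr rfl
          intro t ht
          rw [hjf t (mem_range.mp ht)]
      _ = ∑ i ∈ (range k₀).image jf, Lam tv i := (Finset.sum_image hjinj').symm
      _ ≤ ∑ i ∈ univ.filter (fun i : Fin n => (i : ℕ) < ((range k₀).image jf).card), Lam tv i :=
          sum_subset_le_sorted n (Lam tv) (hLamanti tv htv) _
      _ = ∑ i ∈ univ.filter (fun i : Fin n => (i : ℕ) < k₀), Lam tv i := by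
          rw [Finset.card_image_of_injOn hinjOn, Finset.card_range]
      _ ≤ ∑ i ∈ univ.filter (fun i : Fin n => (i : ℕ) < k₀), Lam 1 i :=
          hmono 1 h1mem tv htv (by rw [htvdef]; linarith) k₀ hk₀n
      _ = ∑ u ∈ range k₀, lam' u := by
          rw [hLam1]
          exact filter_sum_eq n k₀ hk₀n lam lam' hlam'
  have hsum2 : ∑ u ∈ range k₀, lam' u < ∑ t ∈ range k₀, y t := by
    have h1 : ∑ t ∈ range k₀, (lam' t + ε * (-(r' t) - η)) < ∑ t ∈ range k₀, y t :=
      Finset.sum_lt_sum_of_nonempty (Finset.nonempty_range_iff.mpr (by omega))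
        (fun t ht => ((hy t (mem_range.mp ht)).1).1)
    have h2 : ∑ t ∈ range k₀, (lam' t + ε * (-(r' t) - η))
        = (∑ u ∈ range k₀, lam' u) + ε * (-R - (k₀ : ℝ) * η) := by
      rw [Finset.sum_add_distrib]
      congr 1
      rw [← Finset.mul_sum]
      congr 1
      rw [Finset.sum_sub_distrib, ← Finset.sum_neg_distrib, Finset.sum_const, Finset.card_range,
        nsmul_eq_mul]
    have h3 : 0 < ε * (-R - (k₀ : ℝ) * η) := by
      have h4 : -R - (k₀ : ℝ) * η = -R / 2 := by
        rw [hηdef]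
        field_simp
        ring
      rw [h4]
      apply mul_pos hε0 (by linarith)
    linarith
  linarith
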